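/- Let W be a complex 2-dimensional ℂ-linear subspace of ℂ³, regarded inside ℝ^7 ≅ ℝ ⊕ ℂ³ as {0} ⊕ W. Then: (i) the G₂ 3-form φ₀ vanishes identically on {0} ⊕ W, i.e., φ₀(u,v,w) = 0 for all u, v, w ∈ {0} ⊕ W; and (ii) for any vectors u, v ∈ W that are orthonormal with respect to the standard Hermitian inner product on ℂ³ (‖u‖ = ‖v‖ = 1 and ⟨u,v⟩_ℂ = 0), the 4-form ψ₀ = *φ₀ satisfies ψ₀(u, iu, v, iv) = 1, where u, iu, v, iv are regarded as vectors in {0} ⊕ W ⊆ ℝ^7. (This is the linear-algebra content of the statement that every complex surface in ℂ³ is coassociative in ℝ^7.) -/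

import Mathlib

/-!
Identify ℝ^7 with ℝ ⊕ ℂ³ via coordinates (x₁,…,x₇) (0-indexed as 0,…,6), where
z₁ = x₂ + ix₃, z₂ = x₄ + ix₅, z₃ = x₆ + ix₇.  A complex 2-dimensional subspace
W of ℂ³ is regarded inside ℝ^7 as {0} ⊕ W.
-/

noncomputable section

/-- The 3-form `dx_i ∧ dx_j ∧ dx_k` evaluated on vectors `(u,v,w)` of ℝ^7. -/
def dx3 (i j k : Fin 7) (u v w : Fin 7 → ℝ) : ℝ :=
  u i * (v j * w k - v k * w j) - v i * (u j * w k - u k * w j)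
    + w i * (u j * v k - u k * v j)

/-- The G₂ 3-form φ₀ = dx₁₂₃ + dx₁₄₅ + dx₁₆₇ + dx₂₄₆ − dx₂₅₇ − dx₃₄₇ − dx₃₅₆
(0-indexed coordinates). -/
def phi0 (u v w : Fin 7 → ℝ) : ℝ :=
  dx3 0 1 2 u v w + dx3 0 3 4 u v w + dx3 0 5 6 u v w + dx3 1 3 5 u v w
    - dx3 1 4 6 u v w - dx3 2 3 6 u v w - dx3 2 4 5 u v w

/-- The 4-form `dx_i ∧ dx_j ∧ dx_k ∧ dx_l` evaluated on vectors `(u,v,w,y)` of ℝ^7. -/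
def dx4 (i j k l : Fin 7) (u v w y : Fin 7 → ℝ) : ℝ :=
  Matrix.det !![u i, v i, w i, y i;
                u j, v j, w j, y j;
                u k, v k, w k, y k;
                u l, v l, w l, y l]

/-- The 4-form ψ₀ = *φ₀ = dx₄₅₆₇ + dx₂₃₆₇ + dx₂₃₄₅ + dx₁₃₅₇ − dx₁₃₄₆ − dx₁₂₅₆ − dx₁₂₄₇
(0-indexed coordinates). -/
def psi0 (u v w y : Fin 7 → ℝ) : ℝ :=
  dx4 3 4 5 6 u v w y + dx4 1 2 5 6 u v w y + dx4 1 2 3 4 u v w y + dx4 0 2 4 6 u v w y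
    - dx4 0 2 3 5 u v w y - dx4 0 1 4 5 u v w y - dx4 0 1 3 6 u v w y

/-- The embedding ℂ³ → ℝ^7 ≅ ℝ ⊕ ℂ³, z ↦ (0, z). -/
def jmap (z : EuclideanSpace ℂ (Fin 3)) : Fin 7 → ℝ :=
  ![0, (z 0).re, (z 0).im, (z 1).re, (z 1).im, (z 2).re, (z 2).im]

lemma jmap_app0 (z : EuclideanSpace ℂ (Fin 3)) : jmap z 0 = 0 := rfl
lemma jmap_app1 (z : EuclideanSpace ℂ (Fin 3)) : jmap z 1 = (z 0).re := rfl
lemma jmap_app2 (z : EuclideanSpace ℂ (Fin 3)) : jmap z 2 = (z 0).im := rfl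
lemma jmap_app3 (z : EuclideanSpace ℂ (Fin 3)) : jmap z 3 = (z 1).re := rfl
lemma jmap_app4 (z : EuclideanSpace ℂ (Fin 3)) : jmap z 4 = (z 1).im := rfl
lemma jmap_app5 (z : EuclideanSpace ℂ (Fin 3)) : jmap z 5 = (z 2).re := rfl
lemma jmap_app6 (z : EuclideanSpace ℂ (Fin 3)) : jmap z 6 = (z 2).im := rfl

lemma detFour (M : Matrix (Fin 4) (Fin 4) ℝ) :
    M.det =
      M 0 0 * (M 1 1 * (M 2 2 * M 3 3 - M 2 3 * M 3 2)
              - M 1 2 * (M 2 1 * M 3 3 - M 2 3 * M 3 1)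
              + M 1 3 * (M 2 1 * M 3 2 - M 2 2 * M 3 1))
      - M 0 1 * (M 1 0 * (M 2 2 * M 3 3 - M 2 3 * M 3 2)
              - M 1 2 * (M 2 0 * M 3 3 - M 2 3 * M 3 0)
              + M 1 3 * (M 2 0 * M 3 2 - M 2 2 * M 3 0))
      + M 0 2 * (M 1 0 * (M 2 1 * M 3 3 - M 2 3 * M 3 1)
              - M 1 1 * (M 2 0 * M 3 3 - M 2 3 * M 3 0)
              + M 1 3 * (M 2 0 * M 3 1 - M 2 1 * M 3 0))
      - M 0 3 * (M 1 0 * (M 2 1 * M 3 2 - M 2 2 * M 3 1)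
              - M 1 1 * (M 2 0 * M 3 2 - M 2 2 * M 3 0)
              + M 1 2 * (M 2 0 * M 3 1 - M 2 1 * M 3 0)) := by
  rw [Matrix.det_succ_row_zero]
  simp [Fin.sum_univ_succ, Matrix.det_fin_three, Matrix.submatrix,
    show (Fin.succ 2 : Fin 4) = 3 from rfl,
    show (Fin.castSucc 2 : Fin 4) = 2 from rfl,
    show ((1 : Fin 4).succAbove 2) = 3 from rfl,
    show ((2 : Fin 4).succAbove 2) = 3 from rfl,
    show ((3 : Fin 4).succAbove 2) = 2 from rfl]
  ring

lemma dx4_expand (i j k l : Fin 7) (u v w y : Fin 7 → ℝ) :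
    dx4 i j k l u v w y =
      u i * (v j * (w k * y l - w l * y k)
            - w j * (v k * y l - v l * y k)
            + y j * (v k * w l - v l * w k))
      - v i * (u j * (w k * y l - w l * y k)
            - w j * (u k * y l - u l * y k)
            + y j * (u k * w l - u l * w k))
      + w i * (u j * (v k * y l - v l * y k)
            - v j * (u k * y l - u l * y k)
            + y j * (u k * v l - u l * v k))
      - y i * (u j * (v k * w l - v l * w k)
            - v j * (u k * w l - u l * w k)
            + w j * (u k * v l - u l * v k)) := by
  rw [dx4, detFour]
  norm_num [Matrix.cons_val_zero, Matrix.cons_val_one, Matrix.head_cons,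
    Matrix.cons_val_two, Matrix.tail_cons, Matrix.cons_val_three]
  ring

/-- φ₀ restricted to {0} ⊕ ℂ³ is the real part of the complex determinant. -/
lemma phi0_jmap (a b c : EuclideanSpace ℂ (Fin 3)) :
    phi0 (jmap a) (jmap b) (jmap c) =
      (a 0 * (b 1 * c 2 - b 2 * c 1) - b 0 * (a 1 * c 2 - a 2 * c 1)
        + c 0 * (a 1 * b 2 - a 2 * b 1)).re := by
  simp only [phi0, dx3, jmap_app0, jmap_app1, jmap_app2, jmap_app3, jmap_app4, jmap_app5,
    jmap_app6, Complex.mul_re, Complex.mul_im, Complex.add_re, Complex.sub_re,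
    Complex.add_im, Complex.sub_im]
  ring

/-- The key polynomial identity: ψ₀(u, iu, v, iv) = ‖u‖²‖v‖² − |⟨u,v⟩|², written out in
real and imaginary parts of the coordinates of `u` and `v`. -/
lemma psi0_jmap (u v : EuclideanSpace ℂ (Fin 3)) :
    psi0 (jmap u) (jmap (Complex.I • u)) (jmap v) (jmap (Complex.I • v)) =
      ((u 0).re^2+(u 0).im^2+(u 1).re^2+(u 1).im^2+(u 2).re^2+(u 2).im^2) *
      ((v 0).re^2+(v 0).im^2+(v 1).re^2+(v 1).im^2+(v 2).re^2+(v 2).im^2)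
      - ((u 0).re*(v 0).re+(u 0).im*(v 0).im+(u 1).re*(v 1).re+(u 1).im*(v 1).im
          +(u 2).re*(v 2).re+(u 2).im*(v 2).im)^2
      - ((u 0).re*(v 0).im-(u 0).im*(v 0).re+(u 1).re*(v 1).im-(u 1).im*(v 1).re
          +(u 2).re*(v 2).im-(u 2).im*(v 2).re)^2 := by
  simp only [psi0, dx4_expand, jmap_app0, jmap_app1, jmap_app2, jmap_app3, jmap_app4,
    jmap_app5, jmap_app6, PiLp.smul_apply, smul_eq_mul, Complex.mul_re, Complex.mul_im,
    Complex.I_re, Complex.I_im]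
  ring

/-- Every complex 2-dimensional subspace W ⊆ ℂ³, regarded as {0} ⊕ W ⊆ ℝ ⊕ ℂ³ = ℝ^7,
is coassociative: φ₀ vanishes identically on it, and ψ₀ = *φ₀ evaluates to 1 on the
oriented orthonormal frame (u, iu, v, iv) for any Hermitian-orthonormal u, v ∈ W. -/
theorem complex_surface_coassociative (W : Submodule ℂ (EuclideanSpace ℂ (Fin 3)))
    (hW : Module.finrank ℂ W = 2) :
    (∀ u ∈ W, ∀ v ∈ W, ∀ w ∈ W, phi0 (jmap u) (jmap v) (jmap w) = 0) ∧
      (∀ u ∈ W, ∀ v ∈ W, ‖u‖ = 1 → ‖v‖ = 1 → (inner ℂ u v : ℂ) = 0 →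
        psi0 (jmap u) (jmap (Complex.I • u)) (jmap v) (jmap (Complex.I • v)) = 1) := by
  constructor
  · intro u hu v hv w hw
    -- three vectors in a 2-dimensional space are linearly dependent
    have hle : Submodule.span ℂ (Set.range ![u, v, w]) ≤ W := by
      rw [Submodule.span_le]
      rintro x ⟨i, rfl⟩
      fin_cases i <;> simpa
    have hdep : ¬ LinearIndependent ℂ ![u, v, w] := by
      intro hli
      have h3 : Module.finrank ℂ (Submodule.span ℂ (Set.range ![u, v, w])) = 3 := by
        rw [finrank_span_eq_card hli]; simp
      have hmono := Submodule.finrank_mono hle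
      rw [h3, hW] at hmono
      omega
    obtain ⟨g, hg, i, hgi⟩ := Fintype.not_linearIndependent_iff.mp hdep
    -- hence the complex determinant vanishes
    set M : Matrix (Fin 3) (Fin 3) ℂ := Matrix.of fun i j => ![u, v, w] j i with hM
    have hdet : M.det = 0 := by
      rw [← Matrix.exists_mulVec_eq_zero_iff]
      refine ⟨g, ?_, ?_⟩
      · intro h0; exact hgi (by rw [h0]; rfl)
      · funext r
        have := congrArg (fun f : EuclideanSpace ℂ (Fin 3) => f r) hg
        simp only [Finset.sum_apply, PiLp.smul_apply, smul_eq_mul] at this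
        simpa [Matrix.mulVec, dotProduct, hM, mul_comm] using this
    have hdet' : u 0 * (v 1 * w 2 - v 2 * w 1) - v 0 * (u 1 * w 2 - u 2 * w 1)
        + w 0 * (u 1 * v 2 - u 2 * v 1) = 0 := by
      have h3 := Matrix.det_fin_three M
      rw [hdet] at h3
      have hM' : ∀ r c : Fin 3, M r c = ![u, v, w] c r := fun _ _ => rfl
      rw [hM' 0 0, hM' 0 1, hM' 0 2, hM' 1 0, hM' 1 1, hM' 1 2,
        hM' 2 0, hM' 2 1, hM' 2 2] at h3
      simp only [Matrix.cons_val_zero, Matrix.cons_val_one, Matrix.head_cons,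
        Matrix.cons_val_two, Matrix.tail_cons] at h3
      linear_combination -h3
    rw [phi0_jmap, hdet']
    simp
  · intro u hu v hv hu1 hv1 huv
    -- extract the real coordinate identities from the hypotheses
    have h1 : (inner ℂ u u : ℂ) = 1 := by
      rw [inner_self_eq_norm_sq_to_K, hu1]; norm_num
    have h2 : (inner ℂ v v : ℂ) = 1 := by
      rw [inner_self_eq_norm_sq_to_K, hv1]; norm_num
    rw [PiLp.inner_apply] at h1 h2 huv
    simp only [RCLike.inner_apply, Fin.sum_univ_three] at h1 h2 huv
    have hA := congrArg Complex.re h1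
    have hB := congrArg Complex.re h2
    have hC := congrArg Complex.re huv
    have hD := congrArg Complex.im huv
    simp only [Complex.add_re, Complex.add_im, Complex.mul_re, Complex.mul_im,
      Complex.conj_re, Complex.conj_im, Complex.one_re, Complex.one_im,
      Complex.zero_re, Complex.zero_im] at hA hB hC hD
    rw [psi0_jmap]
    linear_combination
      ((v 0).re^2+(v 0).im^2+(v 1).re^2+(v 1).im^2+(v 2).re^2+(v 2).im^2) * hA + hB
        - ((u 0).re*(v 0).re+(u 0).im*(v 0).im+(u 1).re*(v 1).re+(u 1).im*(v 1).im
            +(u 2).re*(v 2).re+(u 2).im*(v 2).im) * hC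
        - ((u 0).re*(v 0).im-(u 0).im*(v 0).re+(u 1).re*(v 1).im-(u 1).im*(v 1).re
            +(u 2).re*(v 2).im-(u 2).im*(v 2).re) * hD

end
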